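/- Let A and B be positive definite real n×n matrices. For a nonzero eigenvector w ∈ ℝⁿ of B^{-1/2} A⁻¹ B^{-1/2} with eigenvalue λ > 0, write w̃ ∈ ℂ^{2n} for the vector whose first n entries are (i/√λ) · A^{-1/2} B^{-1/2} w and whose last n entries are w. Then: (1) for any two such eigenvectors w₁, w₂ (with eigenvalues λ₁, λ₂) satisfying w₁ᵀ w₂ = 0, the Hermitian inner products ⟨w̃₁, w̃₂⟩ and ⟨w̃₁, w̃₂*⟩ both vanish, where w̃₂* is the entrywise complex conjugate; and (2) for any single such eigenvector w, ⟨w̃, w̃*⟩ = 0. -/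

import Mathlib

open Matrix

/-- The square root of a positive semidefinite matrix, as `Matrix.PosSemidef.sqrt` was defined
in the older Mathlib (removed since). -/
noncomputable def Matrix.PosSemidef.sqrt {n 𝕜 : Type*} [Fintype n] [DecidableEq n] [RCLike 𝕜]
    [PartialOrder 𝕜]
    {A : Matrix n n 𝕜} (hA : A.PosSemidef) : Matrix n n 𝕜 :=
  (hA.1.eigenvectorUnitary : Matrix n n 𝕜) * diagonal ((↑) ∘ Real.sqrt ∘ hA.1.eigenvalues) *
    (star (hA.1.eigenvectorUnitary : Matrix n n 𝕜))

/-- The standard Hermitian inner product `⟨u, w⟩ = Σₖ conj(uₖ) wₖ` on `ℂ^{2n}`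
(vectors indexed by `Fin n ⊕ Fin n`). -/
noncomputable def hermInner (n : ℕ) (u w : Fin n ⊕ Fin n → ℂ) : ℂ :=
  ∑ k, star (u k) * w k

lemma sqrt_transpose_real {n : ℕ} {A : Matrix (Fin n) (Fin n) ℝ} (hP : A.PosSemidef) :
    (hP.sqrt)ᵀ = hP.sqrt := by
  simp [Matrix.PosSemidef.sqrt, transpose_mul, Matrix.star_eq_conjTranspose,
    conjTranspose_eq_transpose_of_trivial, mul_assoc]

lemma sqrt_mul_self_real {n : ℕ} {A : Matrix (Fin n) (Fin n) ℝ} (hP : A.PosSemidef) :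
    hP.sqrt * hP.sqrt = A := by
  conv_rhs => rw [hP.1.spectral_theorem, Unitary.conjStarAlgAut_apply]
  unfold Matrix.PosSemidef.sqrt
  calc _ = (hP.1.eigenvectorUnitary : Matrix (Fin n) (Fin n) ℝ) *
        (diagonal ((RCLike.ofReal : ℝ → ℝ) ∘ Real.sqrt ∘ hP.1.eigenvalues) *
          ((star (hP.1.eigenvectorUnitary : Matrix (Fin n) (Fin n) ℝ)) *
            (hP.1.eigenvectorUnitary : Matrix (Fin n) (Fin n) ℝ)) *
          diagonal ((RCLike.ofReal : ℝ → ℝ) ∘ Real.sqrt ∘ hP.1.eigenvalues)) *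
        (star (hP.1.eigenvectorUnitary : Matrix (Fin n) (Fin n) ℝ)) := by
        simp only [mul_assoc]
    _ = _ := by
      rw [Unitary.coe_star_mul_self, mul_one, diagonal_mul_diagonal]
      congr 3
      funext i
      simp [Real.mul_self_sqrt (hP.eigenvalues_nonneg i)]

lemma hermInner_expand (n : ℕ) (c₁ c₂ : ℂ) (v₁ v₂ x₁ x₂ : Fin n → ℝ) :
    hermInner n (Sum.elim (fun i => c₁ * (v₁ i : ℂ)) (fun i => (x₁ i : ℂ)))
      (Sum.elim (fun i => c₂ * (v₂ i : ℂ)) (fun i => (x₂ i : ℂ))) =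
    star c₁ * c₂ * ((v₁ ⬝ᵥ v₂ : ℝ) : ℂ) + ((x₁ ⬝ᵥ x₂ : ℝ) : ℂ) := by
  simp only [hermInner, Fintype.sum_sum_type, Sum.elim_inl, Sum.elim_inr, star_mul',
    Complex.star_def, Complex.conj_ofReal, dotProduct, _root_.map_mul]
  push_cast
  congr 1
  rw [Finset.mul_sum]
  exact Finset.sum_congr rfl (fun i _ => by ring)

lemma star_lift (n : ℕ) (c : ℂ) (v x : Fin n → ℝ) :
    star (Sum.elim (fun i => c * (v i : ℂ)) (fun i => (x i : ℂ))) =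
    Sum.elim (fun i => star c * (v i : ℂ)) (fun i => (x i : ℂ)) := by
  funext k
  cases k <;> simp [star_mul', Complex.star_def, Complex.conj_ofReal, mul_comm]

lemma key (n : ℕ) (A B : Matrix (Fin n) (Fin n) ℝ) (hA : A.PosDef) (hB : B.PosDef)
    (w₁ w₂ : Fin n → ℝ) (lam₂ : ℝ)
    (heig₂ : ((hB.posSemidef.sqrt)⁻¹ * A⁻¹ * (hB.posSemidef.sqrt)⁻¹).mulVec w₂ = lam₂ • w₂) :
    (((hA.posSemidef.sqrt)⁻¹ * (hB.posSemidef.sqrt)⁻¹).mulVec w₁) ⬝ᵥ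
      (((hA.posSemidef.sqrt)⁻¹ * (hB.posSemidef.sqrt)⁻¹).mulVec w₂) = lam₂ * (w₁ ⬝ᵥ w₂) := by
  set SA := hA.posSemidef.sqrt with hSA
  set SB := hB.posSemidef.sqrt with hSB
  have hSAh : SAᵀ = SA := sqrt_transpose_real hA.posSemidef
  have hSBh : SBᵀ = SB := sqrt_transpose_real hB.posSemidef
  have hMT : (SA⁻¹ * SB⁻¹)ᵀ = SB⁻¹ * SA⁻¹ := by
    rw [transpose_mul, transpose_nonsing_inv, transpose_nonsing_inv, hSAh, hSBh]
  have hAinv : SA⁻¹ * SA⁻¹ = A⁻¹ := by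
    rw [← Matrix.mul_inv_rev, sqrt_mul_self_real hA.posSemidef]
  have hstep : ∀ (M : Matrix (Fin n) (Fin n) ℝ) (v x : Fin n → ℝ),
      (M *ᵥ v) ⬝ᵥ x = v ⬝ᵥ (Mᵀ *ᵥ x) := fun M v x => by
    rw [dotProduct_mulVec, vecMul_transpose]
  calc ((SA⁻¹ * SB⁻¹).mulVec w₁) ⬝ᵥ ((SA⁻¹ * SB⁻¹).mulVec w₂)
      = w₁ ⬝ᵥ (((SA⁻¹ * SB⁻¹)ᵀ * (SA⁻¹ * SB⁻¹)).mulVec w₂) := by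
        rw [hstep, mulVec_mulVec]
    _ = lam₂ * (w₁ ⬝ᵥ w₂) := by
        rw [hMT, show SB⁻¹ * SA⁻¹ * (SA⁻¹ * SB⁻¹) = SB⁻¹ * A⁻¹ * SB⁻¹ by
          rw [← hAinv]; noncomm_ring, heig₂, dotProduct_smul, smul_eq_mul]

/-- Orthogonality relations among the lifted eigenvectors `w̃ = ((i/√λ)·A^{-1/2}B^{-1/2}w, w)`:
(1) if `w₁ᵀ w₂ = 0` then `⟨w̃₁, w̃₂⟩ = 0` and `⟨w̃₁, w̃₂*⟩ = 0`;
(2) for any single such eigenvector, `⟨w̃₁, w̃₁*⟩ = 0`. -/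
theorem lifted_eigenvectors_orthogonality (n : ℕ) (A B : Matrix (Fin n) (Fin n) ℝ)
    (hA : A.PosDef) (hB : B.PosDef)
    (w₁ w₂ : Fin n → ℝ) (hw₁ : w₁ ≠ 0) (hw₂ : w₂ ≠ 0) (lam₁ lam₂ : ℝ)
    (hlam₁ : 0 < lam₁) (hlam₂ : 0 < lam₂)
    (heig₁ : ((hB.posSemidef.sqrt)⁻¹ * A⁻¹ * (hB.posSemidef.sqrt)⁻¹).mulVec w₁ = lam₁ • w₁)
    (heig₂ : ((hB.posSemidef.sqrt)⁻¹ * A⁻¹ * (hB.posSemidef.sqrt)⁻¹).mulVec w₂ = lam₂ • w₂)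
    (t₁ t₂ : Fin n ⊕ Fin n → ℂ)
    (ht₁ : t₁ = Sum.elim
      (fun i => (Complex.I / (Real.sqrt lam₁ : ℂ)) *
        ((((hA.posSemidef.sqrt)⁻¹ * (hB.posSemidef.sqrt)⁻¹).mulVec w₁ i : ℝ) : ℂ))
      (fun i => ((w₁ i : ℝ) : ℂ)))
    (ht₂ : t₂ = Sum.elim
      (fun i => (Complex.I / (Real.sqrt lam₂ : ℂ)) *
        ((((hA.posSemidef.sqrt)⁻¹ * (hB.posSemidef.sqrt)⁻¹).mulVec w₂ i : ℝ) : ℂ))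
      (fun i => ((w₂ i : ℝ) : ℂ))) :
    ((∑ i, w₁ i * w₂ i = 0) →
      hermInner n t₁ t₂ = 0 ∧ hermInner n t₁ (star t₂) = 0) ∧
    hermInner n t₁ (star t₁) = 0 := by
  subst ht₁ ht₂
  set c₁ := Complex.I / (Real.sqrt lam₁ : ℂ) with hc₁
  set c₂ := Complex.I / (Real.sqrt lam₂ : ℂ) with hc₂
  set u₁ := ((hA.posSemidef.sqrt)⁻¹ * (hB.posSemidef.sqrt)⁻¹).mulVec w₁ with hu₁
  set u₂ := ((hA.posSemidef.sqrt)⁻¹ * (hB.posSemidef.sqrt)⁻¹).mulVec w₂ with hu₂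
  have key₂ := key n A B hA hB w₁ w₂ lam₂ heig₂
  have key₁ := key n A B hA hB w₁ w₁ lam₁ heig₁
  have hs₁ : (Real.sqrt lam₁ : ℂ) ≠ 0 := by
    exact_mod_cast (Real.sqrt_pos.mpr hlam₁).ne'
  have hsq₁ : (Real.sqrt lam₁ : ℂ) * (Real.sqrt lam₁ : ℂ) = (lam₁ : ℂ) := by
    exact_mod_cast Real.mul_self_sqrt hlam₁.le
  refine ⟨fun h => ?_, ?_⟩
  · have hd : w₁ ⬝ᵥ w₂ = 0 := h
    constructor
    · rw [hermInner_expand, key₂, hd]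
      simp
    · rw [star_lift, hermInner_expand, key₂, hd]
      simp
  · rw [star_lift, hermInner_expand, key₁]
    have hcc : star c₁ * star c₁ = -(1 / (lam₁ : ℂ)) := by
      simp only [hc₁, Complex.star_def, map_div₀, Complex.conj_I, Complex.conj_ofReal,
        div_mul_div_comm, hsq₁, neg_mul_neg, Complex.I_mul_I]
      ring
    rw [hcc]
    have hl : (lam₁ : ℂ) ≠ 0 := by exact_mod_cast hlam₁.ne'
    push_cast
    field_simp
    ring
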